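/- Let N be standard normal, s > 0, m, τ ∈ ℝ, and K < −τ. Then E[(−e^{sN+m} − τ − K)⁺] = −e^{m + s²/2}·Φ(d₁) + (−K − τ)·Φ(d₂), where d₁ = (ln(−K−τ) − m − s²)/s and d₂ = (ln(−K−τ) − m)/s. -/

import Mathlib

open MeasureTheory ProbabilityTheory Real

/-- The standard normal cumulative distribution function. -/
noncomputable def Phi (z : ℝ) : ℝ :=
  ∫ t in Set.Iic z, (Real.sqrt (2 * Real.pi))⁻¹ * Real.exp (-t ^ 2 / 2)

noncomputable def stdPdf (x : ℝ) : ℝ := (Real.sqrt (2 * Real.pi))⁻¹ * Real.exp (-x ^ 2 / 2)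

lemma stdPdf_eq : gaussianPDFReal 0 1 = stdPdf := by
  funext x
  simp [gaussianPDFReal, stdPdf]

lemma integrable_stdPdf : Integrable stdPdf := by
  rw [← stdPdf_eq]; exact ProbabilityTheory.integrable_gaussianPDFReal 0 1

lemma Phi_eq (z : ℝ) : Phi z = ∫ t in Set.Iic z, stdPdf t := rfl

theorem call_price_neg_skew_low_strike
    {Ω : Type*} [MeasurableSpace Ω] (P : Measure Ω) [IsProbabilityMeasure P]
    (N : Ω → ℝ) (hNmeas : Measurable N)
    (hN : Measure.map N P = gaussianReal 0 1)
    (s m τ K : ℝ) (hs : 0 < s) (hK : K < -τ) :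
    ∫ ω, max (-Real.exp (s * N ω + m) - τ - K) 0 ∂P
      = -(Real.exp (m + s ^ 2 / 2)
            * Phi ((Real.log (-K - τ) - m - s ^ 2) / s))
        + (-K - τ) * Phi ((Real.log (-K - τ) - m) / s) := by
  set C : ℝ := -K - τ with hC
  have hCpos : 0 < C := by simp [hC]; linarith
  set b : ℝ := (Real.log C - m) / s with hb
  have hd1 : (Real.log C - m - s ^ 2) / s = b - s := by
    field_simp [hb]; linarith [show s * b = Real.log C - m by rw [hb]; field_simp]
  -- the payoff function
  set g : ℝ → ℝ := fun x => max (-Real.exp (s * x + m) - τ - K) 0 with hg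
  have hg_cont : Continuous g := by
    apply Continuous.max _ continuous_const
    continuity
  -- Step 1: transfer to the Gaussian measure
  have step1 : ∫ ω, g (N ω) ∂P = ∫ x, g x ∂(gaussianReal 0 1) := by
    rw [← hN, integral_map hNmeas.aemeasurable hg_cont.aestronglyMeasurable]
  -- Step 2: integral against the density
  have step2 : ∫ x, g x ∂(gaussianReal 0 1) = ∫ x, stdPdf x * g x := by
    rw [gaussianReal_of_var_ne_zero _ one_ne_zero]
    have : (gaussianPDF 0 1) = fun x => ((Real.toNNReal (gaussianPDFReal 0 1 x) : NNReal) : ENNReal) :=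
      rfl
    rw [this, integral_withDensity_eq_integral_smul
      ((measurable_gaussianPDFReal 0 1).real_toNNReal) g]
    congr 1
    funext x
    rw [NNReal.smul_def, smul_eq_mul, Real.coe_toNNReal _ (gaussianPDFReal_nonneg 0 1 x),
      stdPdf_eq]
  -- pointwise identity with indicator
  have hsb : s * b = Real.log C - m := by
    rw [hb]; field_simp
  have hpoint : ∀ x, stdPdf x * g x
      = Set.indicator (Set.Iic b) (fun x => stdPdf x * (C - Real.exp (s * x + m))) x := by
    intro x
    by_cases hx : x ≤ b
    · have h1 : s * x + m ≤ Real.log C := by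
        have : s * x ≤ s * b := by nlinarith
        linarith
      have h2 : Real.exp (s * x + m) ≤ C := by
        calc Real.exp (s * x + m) ≤ Real.exp (Real.log C) := Real.exp_le_exp.mpr h1
          _ = C := Real.exp_log hCpos
      rw [Set.indicator_of_mem (Set.mem_Iic.mpr hx)]
      have : g x = C - Real.exp (s * x + m) := by
        rw [hg]; simp only [hC]
        rw [max_eq_left (by linarith)]
        ring
      rw [this]
    · have hbx : b < x := lt_of_not_ge hx
      have h1 : Real.log C < s * x + m := by
        have : s * b < s * x := by nlinarith
        linarith
      have h2 : C < Real.exp (s * x + m) := by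
        calc C = Real.exp (Real.log C) := (Real.exp_log hCpos).symm
          _ < Real.exp (s * x + m) := Real.exp_lt_exp.mpr h1
      rw [Set.indicator_of_notMem (fun h => hx (Set.mem_Iic.mp h))]
      have : g x = 0 := by
        rw [hg]; simp only [hC]
        rw [max_eq_right (by linarith)]
      rw [this, mul_zero]
  -- key pdf shift identity
  have hshift : ∀ x : ℝ, stdPdf x * Real.exp (s * x + m)
      = Real.exp (m + s ^ 2 / 2) * stdPdf (x - s) := by
    intro x
    simp only [stdPdf]
    rw [mul_assoc, ← Real.exp_add, mul_comm (Real.exp (m + s ^ 2 / 2)), mul_assoc,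
      ← Real.exp_add]
    congr 1
    ring
  -- integrabilities
  have hint1 : IntegrableOn (fun x => stdPdf x * C) (Set.Iic b) :=
    (integrable_stdPdf.mul_const C).integrableOn
  have hint2 : IntegrableOn (fun x => stdPdf x * Real.exp (s * x + m)) (Set.Iic b) := by
    have : Integrable (fun x => Real.exp (m + s ^ 2 / 2) * stdPdf (x - s)) :=
      (integrable_stdPdf.comp_sub_right s).const_mul _
    refine ((this.congr ?_).integrableOn)
    filter_upwards with x using (hshift x).symm
  -- set-integral of shifted pdf
  have hshift_int : ∫ x in Set.Iic b, stdPdf (x - s) = Phi (b - s) := by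
    rw [Phi_eq]
    rw [← integral_indicator measurableSet_Iic, ← integral_indicator measurableSet_Iic]
    rw [← integral_sub_right_eq_self (Set.indicator (Set.Iic (b - s)) stdPdf) s]
    congr 1
    funext x
    by_cases hx : x ≤ b
    · rw [Set.indicator_of_mem (Set.mem_Iic.mpr hx),
        Set.indicator_of_mem (Set.mem_Iic.mpr (sub_le_sub_right hx s))]
    · rw [Set.indicator_of_notMem (fun h => hx (Set.mem_Iic.mp h)),
        Set.indicator_of_notMem (fun h => hx (by
          have := Set.mem_Iic.mp h; linarith))]
  have hIic : ∫ x in Set.Iic b, stdPdf x = Phi b := (Phi_eq b).symm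
  -- main computation
  rw [step1, step2]
  calc ∫ x, stdPdf x * g x
      = ∫ x in Set.Iic b, stdPdf x * (C - Real.exp (s * x + m)) := by
        rw [← integral_indicator measurableSet_Iic]
        exact integral_congr_ae (Filter.Eventually.of_forall hpoint)
    _ = (∫ x in Set.Iic b, stdPdf x * C)
        - ∫ x in Set.Iic b, stdPdf x * Real.exp (s * x + m) := by
        rw [← integral_sub hint1 hint2]
        congr 1; funext x; ring
    _ = C * Phi b - Real.exp (m + s ^ 2 / 2) * Phi (b - s) := by
        congr 1
        · rw [integral_mul_const, hIic, mul_comm]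
        · simp_rw [hshift]
          rw [integral_const_mul, hshift_int]
    _ = -(Real.exp (m + s ^ 2 / 2) * Phi ((Real.log C - m - s ^ 2) / s))
        + C * Phi ((Real.log C - m) / s) := by
        rw [hd1, ← hb]; ring
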